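/- Fix N ∈ ℕ, let D : ℂ^N → ℂ^{N−1} be the finite-difference operator (Dx)_j = x_{j+1} − x_j, let Λ ⊂ {1,…,N−1}, and let (P_Λ D)† : ℂ^{N−1} → ℂ^N be the Moore–Penrose pseudoinverse of P_Λ D. Then for every column index j ∈ {1,…,N−1} and every frequency k ∈ ℤ with 1 ≤ |k| ≤ ⌈N/2⌉, |⟨A (P_Λ D)† e_j, e_k⟩| ≤ √2·√N/|k|, and for k = 0, |⟨A (P_Λ D)† e_j, e_0⟩| ≤ √N. -/

import Mathlib

open scoped ComplexConjugate

/-- Matrix entries of `P_Λ D` (rows `i ∈ {1,…,N-1}`, columns `j ∈ {1,…,N}`):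
row `i` is `(…, -1, +1, …)` (with `-1` at column `i`) if `i ∈ Λ`, and zero otherwise. -/
def PLD (Λ : Finset ℕ) (i j : ℕ) : ℂ :=
  if i ∈ Λ then (if j = i + 1 then 1 else if j = i then -1 else 0) else 0

/-- `G : ℂ^{N-1} → ℂ^N` (rows `1,…,N`, columns `1,…,N-1`) is a Moore–Penrose
pseudoinverse of `P_Λ D`:  `TGT = T`, `GTG = G`, and `TG`, `GT` are self-adjoint. -/
structure IsPseudoInv (N : ℕ) (Λ : Finset ℕ) (G : ℕ → ℕ → ℂ) : Prop where
  tgt : ∀ i ∈ Finset.Icc 1 (N - 1), ∀ j ∈ Finset.Icc 1 N,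
    ∑ a ∈ Finset.Icc 1 N, ∑ b ∈ Finset.Icc 1 (N - 1),
      PLD Λ i a * G a b * PLD Λ b j = PLD Λ i j
  gtg : ∀ i ∈ Finset.Icc 1 N, ∀ j ∈ Finset.Icc 1 (N - 1),
    ∑ a ∈ Finset.Icc 1 (N - 1), ∑ b ∈ Finset.Icc 1 N,
      G i a * PLD Λ a b * G b j = G i j
  tg_sa : ∀ i ∈ Finset.Icc 1 (N - 1), ∀ j ∈ Finset.Icc 1 (N - 1),
    conj (∑ a ∈ Finset.Icc 1 N, PLD Λ j a * G a i) =
      ∑ a ∈ Finset.Icc 1 N, PLD Λ i a * G a j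
  gt_sa : ∀ i ∈ Finset.Icc 1 N, ∀ j ∈ Finset.Icc 1 N,
    conj (∑ b ∈ Finset.Icc 1 (N - 1), G j b * PLD Λ b i) =
      ∑ b ∈ Finset.Icc 1 (N - 1), G i b * PLD Λ b j

/-- The (unitary) DFT of `y : ℂ^N` (entries `y 1, …, y N`) at frequency `k ∈ ℤ`. -/
noncomputable def dft (N : ℕ) (y : ℕ → ℂ) (k : ℤ) : ℂ :=
  (Real.sqrt N)⁻¹ * ∑ j ∈ Finset.Icc 1 N, y j *
    Complex.exp (2 * Real.pi * Complex.I * (j : ℂ) * (k : ℂ) / (N : ℂ))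

/- STATEMENT 14: incoherence of the columns of `(P_Λ D)†` with the DFT:
`|⟨A (P_Λ D)† e_j, e_k⟩| ≤ √2 √N/|k|` for `1 ≤ |k| ≤ ⌈N/2⌉`, and `≤ √N` at `k = 0`. -/

/-- auxiliary: the "potential" whose discrete derivative is the `j`-th column of `G`. -/
noncomputable def w14 (N : ℕ) (Λ : Finset ℕ) (G : ℕ → ℕ → ℂ) (j a : ℕ) : ℂ :=
  if a ∈ Λ then ∑ b ∈ Finset.Icc 1 N, conj (G b a) * G b j else 0

private lemma w14_zero {N : ℕ} {Λ : Finset ℕ} {G : ℕ → ℕ → ℂ} {j a : ℕ} (ha : a ∉ Λ) :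
    w14 N Λ G j a = 0 := if_neg ha

private lemma conjPLD14 (Λ : Finset ℕ) (a i : ℕ) : conj (PLD Λ a i) = PLD Λ a i := by
  unfold PLD; split_ifs <;> simp

private lemma lemA14 {N : ℕ} {Λ : Finset ℕ} (hΛ : Λ ⊆ Finset.Icc 1 (N - 1))
    {G : ℕ → ℕ → ℂ} (hG : IsPseudoInv N Λ G) {j : ℕ} (hj : j ∈ Finset.Icc 1 (N - 1))
    {i : ℕ} (hi1 : 1 ≤ i) (hi2 : i ≤ N) :
    G i j = w14 N Λ G j (i - 1) - w14 N Λ G j i := by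
  have hi : i ∈ Finset.Icc 1 N := Finset.mem_Icc.mpr ⟨hi1, hi2⟩
  have e1 : ∀ b ∈ Finset.Icc 1 N,
      (∑ a ∈ Finset.Icc 1 (N - 1), G i a * PLD Λ a b)
        = ∑ a ∈ Finset.Icc 1 (N - 1), conj (G b a) * PLD Λ a i := by
    intro b hb
    rw [← hG.gt_sa i hi b hb, map_sum]
    exact Finset.sum_congr rfl fun a _ => by rw [map_mul, conjPLD14]
  calc G i j
      = ∑ a ∈ Finset.Icc 1 (N - 1), ∑ b ∈ Finset.Icc 1 N, G i a * PLD Λ a b * G b j :=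
        (hG.gtg i hi j hj).symm
    _ = ∑ b ∈ Finset.Icc 1 N, (∑ a ∈ Finset.Icc 1 (N - 1), G i a * PLD Λ a b) * G b j := by
        rw [Finset.sum_comm]
        exact Finset.sum_congr rfl fun b _ => (Finset.sum_mul _ _ _).symm
    _ = ∑ b ∈ Finset.Icc 1 N,
          (∑ a ∈ Finset.Icc 1 (N - 1), conj (G b a) * PLD Λ a i) * G b j :=
        Finset.sum_congr rfl fun b hb => by rw [e1 b hb]
    _ = ∑ a ∈ Finset.Icc 1 (N - 1),
          PLD Λ a i * (∑ b ∈ Finset.Icc 1 N, conj (G b a) * G b j) := by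
        simp_rw [Finset.sum_mul]
        rw [Finset.sum_comm]
        refine Finset.sum_congr rfl fun a _ => ?_
        rw [Finset.mul_sum]
        exact Finset.sum_congr rfl fun b _ => by ring
    _ = ∑ a ∈ Finset.Icc 1 (N - 1),
          ((if a = i - 1 then w14 N Λ G j a else 0) - (if a = i then w14 N Λ G j a else 0)) := by
        refine Finset.sum_congr rfl fun a ha => ?_
        obtain ⟨ha1, ha2⟩ := Finset.mem_Icc.mp ha
        by_cases haΛ : a ∈ Λ
        · simp only [PLD, w14, if_pos haΛ]
          split_ifs <;> first | (exfalso; omega) | ring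
        · simp [PLD, w14, haΛ]
    _ = w14 N Λ G j (i - 1) - w14 N Λ G j i := by
        rw [Finset.sum_sub_distrib, Finset.sum_ite_eq', Finset.sum_ite_eq']
        have hzn : ∀ a : ℕ, a ∉ Finset.Icc 1 (N - 1) → w14 N Λ G j a = 0 := fun a ha =>
          w14_zero (fun hc => ha (hΛ hc))
        have e2 : (if i - 1 ∈ Finset.Icc 1 (N - 1) then w14 N Λ G j (i - 1) else 0)
            = w14 N Λ G j (i - 1) := by
          split_ifs with h
          · rfl
          · exact (hzn _ h).symm
        have e3 : (if i ∈ Finset.Icc 1 (N - 1) then w14 N Λ G j i else 0)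
            = w14 N Λ G j i := by
          split_ifs with h
          · rfl
          · exact (hzn _ h).symm
        rw [e2, e3]

private lemma lemB14 {N : ℕ} {Λ : Finset ℕ} (hΛ : Λ ⊆ Finset.Icc 1 (N - 1))
    {G : ℕ → ℕ → ℂ} (hG : IsPseudoInv N Λ G) {j : ℕ} (hj : j ∈ Finset.Icc 1 (N - 1))
    {a : ℕ} (ha : a ∈ Λ) :
    G (a + 1) j - G a j = if a = j then 1 else 0 := by
  have haI : a ∈ Finset.Icc 1 (N - 1) := hΛ ha
  obtain ⟨ha1, ha2⟩ := Finset.mem_Icc.mp haI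
  have hN1 : 1 ≤ N := le_trans ha1 (le_trans ha2 (Nat.sub_le N 1))
  -- Step 1 : (TG)_{q a} = δ_{q a}  for all q ∈ Icc 1 (N-1)
  have step1 : ∀ q ∈ Finset.Icc 1 (N - 1),
      (∑ m ∈ Finset.Icc 1 N, PLD Λ q m * G m a) = if q = a then 1 else 0 := by
    intro q hq
    obtain ⟨hq1, hq2⟩ := Finset.mem_Icc.mp hq
    have htgt : ∀ m' ∈ Finset.Icc (a + 1) N,
        ∑ m ∈ Finset.Icc 1 N, ∑ b ∈ Finset.Icc 1 (N - 1),
          PLD Λ q m * G m b * PLD Λ b m' = PLD Λ q m' :=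
      fun m' hm' => hG.tgt q hq m' (Finset.mem_Icc.mpr (by
        obtain ⟨h1, h2⟩ := Finset.mem_Icc.mp hm'; omega))
    have hrow : ∀ b ∈ Finset.Icc 1 (N - 1),
        (∑ m' ∈ Finset.Icc (a + 1) N, PLD Λ b m') = if b = a then 1 else 0 := by
      intro b hb
      obtain ⟨hb1, hb2⟩ := Finset.mem_Icc.mp hb
      by_cases hbΛ : b ∈ Λ
      · have : ∀ m' : ℕ, PLD Λ b m'
            = ((if m' = b + 1 then (1:ℂ) else 0) - (if m' = b then 1 else 0)) := by
          intro m'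
          simp only [PLD, if_pos hbΛ]
          split_ifs <;> first | (exfalso; omega) | ring
        rw [Finset.sum_congr rfl fun m' _ => this m', Finset.sum_sub_distrib,
          Finset.sum_ite_eq', Finset.sum_ite_eq']
        by_cases hba : b = a
        · subst hba
          rw [if_pos (Finset.mem_Icc.mpr (by omega)), if_neg (by
            intro hc; obtain ⟨h1, _⟩ := Finset.mem_Icc.mp hc; omega)]
          simp
        · by_cases hbig : a + 1 ≤ b
          · rw [if_pos (Finset.mem_Icc.mpr (by omega)), if_pos (Finset.mem_Icc.mpr (by omega))]
            simp [hba]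
          · rw [if_neg (by intro hc; obtain ⟨h1, _⟩ := Finset.mem_Icc.mp hc; omega),
              if_neg (by intro hc; obtain ⟨h1, _⟩ := Finset.mem_Icc.mp hc; omega)]
            simp [hba]
      · simp only [PLD, if_neg hbΛ]
        have hba : b ≠ a := fun hc => hbΛ (hc ▸ ha)
        simp [hba]
    -- sum tgt over m' ∈ Icc (a+1) N
    have hsum := Finset.sum_congr rfl htgt
    -- LHS rearrangement
    have hLHS : (∑ m' ∈ Finset.Icc (a + 1) N, ∑ m ∈ Finset.Icc 1 N, ∑ b ∈ Finset.Icc 1 (N - 1),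
          PLD Λ q m * G m b * PLD Λ b m')
        = ∑ m ∈ Finset.Icc 1 N, PLD Λ q m * G m a := by
      rw [Finset.sum_comm]
      refine Finset.sum_congr rfl fun m _ => ?_
      rw [Finset.sum_comm]
      have : ∀ b ∈ Finset.Icc 1 (N - 1),
          (∑ m' ∈ Finset.Icc (a + 1) N, PLD Λ q m * G m b * PLD Λ b m')
            = PLD Λ q m * G m b * (if b = a then 1 else 0) := by
        intro b hb
        rw [← Finset.mul_sum, hrow b hb]
      rw [Finset.sum_congr rfl this]
      have : ∀ b ∈ Finset.Icc 1 (N - 1),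
          PLD Λ q m * G m b * (if b = a then 1 else 0)
            = if b = a then PLD Λ q m * G m a else 0 := by
        intro b hb
        split_ifs with h
        · subst h; ring
        · ring
      rw [Finset.sum_congr rfl this, Finset.sum_ite_eq', if_pos haI]
    -- RHS
    have hRHS : (∑ m' ∈ Finset.Icc (a + 1) N, PLD Λ q m') = if q = a then 1 else 0 :=
      hrow q hq
    rw [hLHS, hRHS] at hsum
    exact hsum
  -- Step 2 : transpose, (TG)_{a j} = δ_{a j}
  have step2 : (∑ m ∈ Finset.Icc 1 N, PLD Λ a m * G m j) = if a = j then 1 else 0 := by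
    have := hG.tg_sa a haI j hj
    rw [step1 j hj] at this
    rw [← this]
    by_cases h : a = j
    · subst h; simp
    · rw [if_neg (fun hc => h hc.symm), if_neg h]; simp
  -- Step 3 : expand the left side
  have step3 : (∑ m ∈ Finset.Icc 1 N, PLD Λ a m * G m j) = G (a + 1) j - G a j := by
    have hterm : ∀ m : ℕ, PLD Λ a m * G m j
        = (if m = a + 1 then G m j else 0) - (if m = a then G m j else 0) := by
      intro m
      simp only [PLD, if_pos ha]
      split_ifs <;> first | (exfalso; omega) | ring
    rw [Finset.sum_congr rfl fun m _ => hterm m, Finset.sum_sub_distrib,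
      Finset.sum_ite_eq', Finset.sum_ite_eq',
      if_pos (Finset.mem_Icc.mpr (by omega)), if_pos (Finset.mem_Icc.mpr (by omega))]
  rw [← step3, step2]

private lemma tele14 (f : ℕ → ℂ) (p : ℕ) (hp : 1 ≤ p) :
    ∀ q, p ≤ q → ∑ m ∈ Finset.Icc p q, (f (m - 1) - f m) = f (p - 1) - f q := by
  intro q
  induction q with
  | zero => intro h; omega
  | succ q ih =>
    intro h
    rcases Nat.lt_or_ge p (q + 1) with h' | h'
    · have hpq : p ≤ q := by omega
      rw [Finset.sum_Icc_succ_top (by omega), ih hpq]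
      simp
    · have : p = q + 1 := by omega
      subst this
      simp

private lemma sumcol14 {N : ℕ} {Λ : Finset ℕ} (hΛ : Λ ⊆ Finset.Icc 1 (N - 1))
    {G : ℕ → ℕ → ℂ} (hG : IsPseudoInv N Λ G) {j : ℕ} (hj : j ∈ Finset.Icc 1 (N - 1))
    (p q : ℕ) (hp : 1 ≤ p) (hpq : p ≤ q) (hqN : q ≤ N) :
    ∑ m ∈ Finset.Icc p q, G m j = w14 N Λ G j (p - 1) - w14 N Λ G j q := by
  rw [Finset.sum_congr rfl (fun m hm => by
    obtain ⟨h1, h2⟩ := Finset.mem_Icc.mp hm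
    exact lemA14 hΛ hG hj (by omega) (by omega))]
  exact tele14 (w14 N Λ G j) p hp q hpq

private lemma const14 {N : ℕ} {Λ : Finset ℕ} (hΛ : Λ ⊆ Finset.Icc 1 (N - 1))
    {G : ℕ → ℕ → ℂ} (hG : IsPseudoInv N Λ G) {j : ℕ} (hj : j ∈ Finset.Icc 1 (N - 1))
    (p q : ℕ) (hint : ∀ i, p ≤ i → i < q → i ∈ Λ ∧ i ≠ j) :
    ∀ m, p ≤ m → m ≤ q → G m j = G p j := by
  suffices h : ∀ t, p + t ≤ q → G (p + t) j = G p j by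
    intro m hpm hmq
    have := h (m - p) (by omega)
    rwa [Nat.add_sub_cancel' hpm] at this
  intro t
  induction t with
  | zero => intro _; rfl
  | succ t ih =>
    intro hle
    obtain ⟨hmem, hne⟩ := hint (p + t) (by omega) (by omega)
    have hb := lemB14 hΛ hG hj hmem
    rw [if_neg hne] at hb
    have h2 : G (p + t + 1) j = G (p + t) j := sub_eq_zero.mp hb
    rw [show p + (t + 1) = p + t + 1 from rfl, h2, ih (by omega)]

private lemma run14 {N : ℕ} {Λ : Finset ℕ} (hΛ : Λ ⊆ Finset.Icc 1 (N - 1))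
    (m : ℕ) (hm1 : 1 ≤ m) (hmN : m ≤ N) :
    ∃ p q, 1 ≤ p ∧ p ≤ m ∧ m ≤ q ∧ q ≤ N ∧ (p - 1) ∉ Λ ∧ q ∉ Λ ∧
      (∀ i, p ≤ i → i < q → i ∈ Λ) := by
  have hmem : ∀ a ∈ Λ, 1 ≤ a ∧ a ≤ N - 1 := fun a ha => Finset.mem_Icc.mp (hΛ ha)
  have hqex : ∃ t, (m + t) ∉ Λ := ⟨N - m, fun hc => by have := hmem _ hc; omega⟩
  have hpex : ∃ s, (m - s) - 1 ∉ Λ := ⟨m, fun hc => by have := hmem _ hc; omega⟩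
  refine ⟨m - Nat.find hpex, m + Nat.find hqex, ?_, by omega, by omega, ?_, ?_, ?_, ?_⟩
  · -- 1 ≤ m - d
    have hdle : Nat.find hpex ≤ m - 1 :=
      Nat.find_min' hpex (by intro hc; have := hmem _ hc; omega)
    omega
  · -- m + e ≤ N
    rcases Nat.eq_zero_or_pos (Nat.find hqex) with h0 | h0
    · omega
    · have : m + (Nat.find hqex - 1) ∈ Λ := by
        by_contra hc
        exact Nat.find_min hqex (by omega) hc
      have := hmem _ this
      omega
  · -- (m - d) - 1 ∉ Λ
    exact Nat.find_spec hpex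
  · -- m + e ∉ Λ
    exact Nat.find_spec hqex
  · -- interior
    intro i hpi hiq
    rcases Nat.lt_or_ge i m with h | h
    · by_contra hc
      exact Nat.find_min hpex (show m - i - 1 < Nat.find hpex by omega)
        (by rwa [show m - (m - i - 1) - 1 = i from by omega])
    · by_contra hc
      exact Nat.find_min hqex (show i - m < Nat.find hqex by omega)
        (by rwa [show m + (i - m) = i from by omega])

private lemma zero14 {N : ℕ} {Λ : Finset ℕ} (hΛ : Λ ⊆ Finset.Icc 1 (N - 1))
    {G : ℕ → ℕ → ℂ} (hG : IsPseudoInv N Λ G) {j : ℕ} (hj : j ∈ Finset.Icc 1 (N - 1))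
    (m : ℕ) (hm1 : 1 ≤ m) (hmN : m ≤ N) :
    (∃ p q, 1 ≤ p ∧ p ≤ m ∧ m ≤ q ∧ q ≤ N ∧ (p - 1) ∉ Λ ∧ q ∉ Λ ∧
      (∀ i, p ≤ i → i < q → i ∈ Λ) ∧ p ≤ j ∧ j < q) ∨ G m j = 0 := by
  obtain ⟨p, q, h1, h2, h3, h4, h5, h6, h7⟩ := run14 hΛ m hm1 hmN
  by_cases hcase : p ≤ j ∧ j < q
  · exact Or.inl ⟨p, q, h1, h2, h3, h4, h5, h6, h7, hcase.1, hcase.2⟩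
  · right
    have hconst := const14 hΛ hG hj p q
      (fun i hip hiq => ⟨h7 i hip hiq, by omega⟩)
    have hsum : ∑ m' ∈ Finset.Icc p q, G m' j = 0 := by
      rw [sumcol14 hΛ hG hj p q h1 (by omega) h4, w14_zero h5, w14_zero h6, sub_zero]
    have hsum2 : ∑ m' ∈ Finset.Icc p q, G m' j = ((q + 1 - p : ℕ) : ℂ) * G p j := by
      rw [Finset.sum_congr rfl (fun m' hm' => by
        obtain ⟨ha, hb⟩ := Finset.mem_Icc.mp hm'
        exact hconst m' ha hb), Finset.sum_const, Nat.card_Icc, nsmul_eq_mul]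
    have hcard : ((q + 1 - p : ℕ) : ℂ) ≠ 0 := by
      have : q + 1 - p ≠ 0 := by omega
      exact_mod_cast Nat.cast_ne_zero.mpr this
    have hp0 : G p j = 0 := by
      have := hsum2.symm.trans hsum
      exact (mul_eq_zero.mp this).resolve_left hcard
    rw [hconst m h2 h3, hp0]

private lemma geomMul14 (ω : ℂ) (p : ℕ) (hp : 1 ≤ p) :
    ∀ q, p ≤ q → (ω - 1) * ∑ i ∈ Finset.Icc p q, ω ^ i = ω ^ (q + 1) - ω ^ p := by
  intro q
  induction q with
  | zero => intro h; omega
  | succ q ih =>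
    intro h
    rcases Nat.lt_or_ge p (q + 1) with h' | h'
    · rw [Finset.sum_Icc_succ_top (by omega), mul_add, ih (by omega)]
      ring
    · have : p = q + 1 := by omega
      subst this
      simp [Finset.Icc_self]
      ring

private lemma geomBound14 (ω : ℂ) (h1 : norm ω = 1) (hne : norm (ω - 1) ≠ 0)
    (p q : ℕ) (hp : 1 ≤ p) :
    norm (∑ i ∈ Finset.Icc p q, ω ^ i) ≤ 2 / norm (ω - 1) := by
  have hpos : 0 < norm (ω - 1) := lt_of_le_of_ne (by positivity) (Ne.symm hne)
  rcases Nat.lt_or_ge q p with h | h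
  · rw [Finset.Icc_eq_empty (by omega)]
    simp
    positivity
  · have key := geomMul14 ω p hp q h
    have h2 : norm (ω ^ (q+1) - ω ^ p) ≤ 2 := by
      calc norm (ω ^ (q+1) - ω ^ p) ≤ norm (ω ^ (q+1)) + norm (ω ^ p) := by
            simpa [sub_eq_add_neg] using norm_add_le (ω ^ (q+1)) (-(ω ^ p))
        _ = 2 := by rw [norm_pow, norm_pow, h1]; norm_num
    rw [ge_iff_le, ← Nat.lt_succ_iff] at h
    rw [le_div_iff₀ hpos, mul_comm]
    calc norm (ω - 1) * norm (∑ i ∈ Finset.Icc p q, ω ^ i)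
        = norm ((ω - 1) * ∑ i ∈ Finset.Icc p q, ω ^ i) := (norm_mul _ _).symm
      _ = norm (ω ^ (q+1) - ω ^ p) := by rw [key]
      _ ≤ 2 := h2

section
open Real
private lemma sinBound14 (N m : ℕ) (hN : 2 ≤ N) (hm1 : 1 ≤ m) (hm2 : m ≤ (N + 1) / 2) :
    (m : ℝ) ^ 2 / (N : ℝ) ^ 2 ≤ 2 * Real.sin (π * m / N) ^ 2 := by
  have hNpos : (0 : ℝ) < N := by positivity
  have hmpos : (0 : ℝ) < m := by exact_mod_cast hm1
  rcases le_or_gt (2 * m) N with h | h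
  · have hhr : (2 : ℝ) * m ≤ N := by exact_mod_cast h
    have h1 : 0 ≤ π * m / N := by positivity
    have h2 : π * m / N ≤ π / 2 := by
      rw [div_le_div_iff₀ hNpos two_pos]
      nlinarith [Real.pi_pos]
    have hs := Real.mul_le_sin h1 h2
    have h3 : 2 / π * (π * m / N) = 2 * m / N := by
      field_simp
    rw [h3] at hs
    have h4 : (2 * (m:ℝ) / N) ^ 2 ≤ Real.sin (π * m / N) ^ 2 :=
      pow_le_pow_left₀ (by positivity) hs 2
    have h5 : (2 * (m:ℝ) / N) ^ 2 = 4 * m ^ 2 / N ^ 2 := by ring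
    rw [h5] at h4
    have hq : (0:ℝ) ≤ (m:ℝ)^2 / (N:ℝ)^2 := by positivity
    have h10 : 4 * (m:ℝ)^2 / (N:ℝ)^2 = 4 * ((m:ℝ)^2/(N:ℝ)^2) := by ring
    rw [h10] at h4
    linarith
  · have h2m : 2 * m = N + 1 := by omega
    have hm2' : 2 ≤ m := by omega
    have hNr : (N : ℝ) + 1 = 2 * m := by exact_mod_cast h2m.symm
    have hsin_eq : Real.sin (π * m / N) = Real.sin (π * ((m : ℝ) - 1) / N) := by
      rw [← Real.sin_pi_sub]
      congr 1
      field_simp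
      linear_combination hNr
    have hm1r : (1:ℝ) ≤ m := by exact_mod_cast hm1
    have h6 : (0:ℝ) ≤ (m:ℝ) - 1 := by linarith
    have h1 : 0 ≤ π * ((m : ℝ) - 1) / N :=
      div_nonneg (mul_nonneg Real.pi_pos.le h6) hNpos.le
    have h2 : π * ((m : ℝ) - 1) / N ≤ π / 2 := by
      rw [div_le_div_iff₀ hNpos two_pos]
      nlinarith [Real.pi_pos]
    have hs := Real.mul_le_sin h1 h2
    have h3 : 2 / π * (π * ((m:ℝ) - 1) / N) = 2 * ((m:ℝ) - 1) / N := by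
      field_simp
    rw [h3] at hs
    rw [hsin_eq]
    have hnn : 0 ≤ 2 * ((m:ℝ) - 1) / N := by positivity
    have h4 : (2 * ((m:ℝ) - 1) / N) ^ 2 ≤ Real.sin (π * ((m:ℝ) - 1) / N) ^ 2 :=
      pow_le_pow_left₀ hnn hs 2
    have h7 : (2:ℝ) ≤ m := by exact_mod_cast hm2'
    have h8 : 8 * ((m:ℝ) - 1) ^ 2 ≥ m ^ 2 := by nlinarith
    have h9 : (2 * ((m:ℝ) - 1) / N) ^ 2 = 4 * ((m:ℝ)-1) ^ 2 / N ^ 2 := by ring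
    rw [h9] at h4
    have hN2 : (0:ℝ) < (N:ℝ) ^ 2 := by positivity
    rw [div_le_iff₀ hN2] at h4 ⊢
    nlinarith

private lemma absExp14 (θ : ℝ) :
    norm (Complex.exp (θ * Complex.I) - 1) ^ 2 = 2 - 2 * Real.cos θ := by
  have h : Complex.exp (θ * Complex.I) - 1
      = ((Real.cos θ - 1 : ℝ) : ℂ) + ((Real.sin θ : ℝ) : ℂ) * Complex.I := by
    rw [Complex.exp_mul_I, ← Complex.ofReal_cos, ← Complex.ofReal_sin]
    push_cast
    ring
  rw [h, Complex.sq_norm, Complex.normSq_add_mul_I]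
  nlinarith [Real.sin_sq_add_cos_sq θ]

end
theorem stmt14 (N : ℕ) (Λ : Finset ℕ) (hΛ : Λ ⊆ Finset.Icc 1 (N - 1))
    (G : ℕ → ℕ → ℂ) (hG : IsPseudoInv N Λ G) :
    ∀ j ∈ Finset.Icc 1 (N - 1),
      (∀ k : ℤ, 1 ≤ k.natAbs → k.natAbs ≤ (N + 1) / 2 →
        ‖dft N (fun i => G i j) k‖ ≤
          Real.sqrt 2 * Real.sqrt N / |(k : ℝ)|) ∧
      ‖dft N (fun i => G i j) 0‖ ≤ Real.sqrt N := by
  intro j hj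
  obtain ⟨hj1, hj2⟩ := Finset.mem_Icc.mp hj
  have hN2 : 2 ≤ N := by omega
  have h0Λ : (0 : ℕ) ∉ Λ := fun hc => by have := Finset.mem_Icc.mp (hΛ hc); omega
  have hNΛ : N ∉ Λ := fun hc => by have := Finset.mem_Icc.mp (hΛ hc); omega
  have hsumall : ∑ i ∈ Finset.Icc 1 N, G i j = 0 := by
    rw [sumcol14 hΛ hG hj 1 N le_rfl (by omega) le_rfl]
    norm_num [w14_zero h0Λ, w14_zero hNΛ]
  constructor
  · intro k hk1 hk2
    have hmpos : (0 : ℝ) < (k.natAbs : ℝ) := by exact_mod_cast hk1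
    have hNR : (0 : ℝ) < (N : ℝ) := by exact_mod_cast (by omega : 0 < N)
    set θ : ℝ := 2 * Real.pi * k / N with hθ
    set ω : ℂ := Complex.exp (θ * Complex.I) with hω
    have hωabs : norm ω = 1 := Complex.norm_exp_ofReal_mul_I θ
    have hexp : ∀ i : ℕ,
        Complex.exp (2 * Real.pi * Complex.I * (i : ℂ) * (k : ℂ) / (N : ℂ)) = ω ^ i := by
      intro i
      rw [hω, ← Complex.exp_nat_mul]
      congr 1
      rw [hθ]
      have hN0 : (N : ℂ) ≠ 0 := by exact_mod_cast Nat.cast_ne_zero.mpr (by omega)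
      push_cast
      field_simp
    -- lower bound on |ω - 1|
    have hsin := sinBound14 N k.natAbs hN2 hk1 hk2
    have hcosθ : Real.cos θ = 1 - 2 * Real.sin (Real.pi * k.natAbs / N) ^ 2 := by
      have hkR : ((k : ℝ) = (k.natAbs : ℝ)) ∨ ((k : ℝ) = -(k.natAbs : ℝ)) := by
        rcases Int.natAbs_eq k with h | h
        · left; conv_lhs => rw [h]
          simp [Nat.cast_natAbs, Int.cast_abs]
        · right; conv_lhs => rw [h]
          push_cast
          simp [Nat.cast_natAbs, Int.cast_abs]
      have h2 : Real.cos θ = Real.cos (2 * (Real.pi * k.natAbs / N)) := by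
        rcases hkR with h | h
        · rw [hθ, h]
          congr 1
          ring
        · rw [hθ, h, show 2 * Real.pi * (-(k.natAbs : ℝ)) / N
              = -(2 * (Real.pi * (k.natAbs : ℝ) / N)) by ring, Real.cos_neg]
      rw [h2, Real.cos_two_mul']
      have := Real.sin_sq_add_cos_sq (Real.pi * k.natAbs / N)
      linarith
    have habs2 : norm (ω - 1) ^ 2 = 4 * Real.sin (Real.pi * k.natAbs / N) ^ 2 := by
      rw [hω, absExp14 θ, hcosθ]
      ring
    have hge : Real.sqrt 2 * k.natAbs / N ≤ norm (ω - 1) := by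
      have h1 : (Real.sqrt 2 * k.natAbs / N) ^ 2 ≤ norm (ω - 1) ^ 2 := by
        rw [habs2]
        have e : (Real.sqrt 2 * (k.natAbs : ℝ) / N) ^ 2
            = 2 * ((k.natAbs : ℝ) ^ 2 / (N : ℝ) ^ 2) := by
          rw [div_pow, mul_pow, Real.sq_sqrt (by norm_num : (0:ℝ) ≤ 2)]
          ring
        rw [e]
        linarith
      have h2 : 0 ≤ Real.sqrt 2 * (k.natAbs : ℝ) / N := by positivity
      nlinarith [norm_nonneg (ω - 1)]
    have hωpos : 0 < norm (ω - 1) :=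
      lt_of_lt_of_le (by positivity) hge
    -- bound on the exponential sum
    have hSbound : norm (∑ i ∈ Finset.Icc 1 N, G i j * ω ^ i)
        ≤ 2 / norm (ω - 1) := by
      by_cases hjΛ : j ∈ Λ
      · -- run of j
        obtain ⟨p, q, hp1, hpj, hjq', hqN, hpΛ, hqΛ, hint⟩ := run14 hΛ j hj1 (by omega)
        have hjq : j < q := lt_of_le_of_ne hjq' (fun hc => hqΛ (hc ▸ hjΛ))
        set α := G p j with hα
        have hlow : ∀ i, p ≤ i → i ≤ j → G i j = α :=
          const14 hΛ hG hj p j (fun i hip hij => ⟨hint i hip (by omega), by omega⟩)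
        have hαj : G j j = α := hlow j hpj le_rfl
        have hjump := lemB14 hΛ hG hj hjΛ
        rw [if_pos rfl] at hjump
        have hhigh : ∀ i, j + 1 ≤ i → i ≤ q → G i j = α + 1 := by
          intro i h1 h2
          have hc := const14 hΛ hG hj (j + 1) q
            (fun i' hi' hi'' => ⟨hint i' (by omega) hi'', by omega⟩) i h1 h2
          rw [hc]
          linear_combination hjump + hαj
        have hout : ∀ i, 1 ≤ i → i ≤ N → (i < p ∨ q < i) → G i j = 0 := by
          intro i h1 h2 h3
          rcases zero14 hΛ hG hj i h1 h2 with
            ⟨p', q', hp'1, hp'i, hiq', hq'N, hp'Λ, hq'Λ, hint', hp'j, hjq'2⟩ | h0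
          · exfalso
            rcases h3 with h3 | h3
            · exact hpΛ (hint' (p - 1) (by omega) (by omega))
            · exact hqΛ (hint' q (by omega) (by omega))
          · exact h0
        have hsub : Finset.Icc p q ⊆ Finset.Icc 1 N :=
          Finset.Icc_subset_Icc (by omega) (by omega)
        have hres : ∑ i ∈ Finset.Icc 1 N, G i j * ω ^ i
            = ∑ i ∈ Finset.Icc p q, G i j * ω ^ i := by
          refine (Finset.sum_subset hsub fun i hi hni => ?_).symm
          obtain ⟨h1, h2⟩ := Finset.mem_Icc.mp hi
          have : i < p ∨ q < i := by
            by_contra hc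
            push_neg at hc
            exact hni (Finset.mem_Icc.mpr ⟨hc.1, hc.2⟩)
          rw [hout i h1 h2 this, zero_mul]
        have hf1 : (Finset.Icc p q).filter (fun i => i ≤ j) = Finset.Icc p j := by
          ext i
          simp only [Finset.mem_filter, Finset.mem_Icc]
          omega
        have hf2 : (Finset.Icc p q).filter (fun i => ¬ i ≤ j) = Finset.Icc (j + 1) q := by
          ext i
          simp only [Finset.mem_filter, Finset.mem_Icc]
          omega
        have hS : ∑ i ∈ Finset.Icc p q, G i j * ω ^ i
            = α * (∑ i ∈ Finset.Icc p j, ω ^ i)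
              + (α + 1) * (∑ i ∈ Finset.Icc (j + 1) q, ω ^ i) := by
          rw [Finset.sum_congr rfl (fun i hi => by
            obtain ⟨h1, h2⟩ := Finset.mem_Icc.mp hi
            show G i j * ω ^ i = if i ≤ j then α * ω ^ i else (α + 1) * ω ^ i
            by_cases hile : i ≤ j
            · rw [if_pos hile, hlow i h1 hile]
            · rw [if_neg hile, hhigh i (by omega) h2]), Finset.sum_ite, hf1, hf2,
            ← Finset.mul_sum, ← Finset.mul_sum]
        -- the value of α
        have hcards : ∑ i ∈ Finset.Icc p q, G i j
            = ((j + 1 - p : ℕ) : ℂ) * α + ((q + 1 - (j + 1) : ℕ) : ℂ) * (α + 1) := by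
          rw [Finset.sum_congr rfl (fun i hi => by
            obtain ⟨h1, h2⟩ := Finset.mem_Icc.mp hi
            show G i j = if i ≤ j then α else α + 1
            by_cases hile : i ≤ j
            · rw [if_pos hile, hlow i h1 hile]
            · rw [if_neg hile, hhigh i (by omega) h2]), Finset.sum_ite, hf1, hf2,
            Finset.sum_const, Finset.sum_const, Nat.card_Icc, Nat.card_Icc,
            nsmul_eq_mul, nsmul_eq_mul]
        have hrunzero : ∑ i ∈ Finset.Icc p q, G i j = 0 := by
          rw [sumcol14 hΛ hG hj p q hp1 (by omega) hqN, w14_zero hpΛ, w14_zero hqΛ, sub_zero]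
        have heq : ((j + 1 - p : ℕ) : ℂ) * α + ((q + 1 - (j + 1) : ℕ) : ℂ) * (α + 1) = 0 :=
          hcards ▸ hrunzero
        set n1 : ℕ := j + 1 - p with hn1
        set n2 : ℕ := q + 1 - (j + 1) with hn2
        have hn1pos : 1 ≤ n1 := by omega
        have hn2pos : 1 ≤ n2 := by omega
        have hdenR : (0 : ℝ) < (n1 : ℝ) + (n2 : ℝ) := by positivity
        have hden : ((n1 : ℂ) + (n2 : ℂ)) ≠ 0 := by
          rw [show ((n1 : ℂ) + (n2 : ℂ)) = ((n1 + n2 : ℕ) : ℂ) by push_cast; ring]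
          exact Nat.cast_ne_zero.mpr (by omega)
        have hαval : α = -((n2 : ℂ)) / ((n1 : ℂ) + (n2 : ℂ)) := by
          field_simp
          linear_combination heq
        have hα1val : α + 1 = ((n1 : ℂ)) / ((n1 : ℂ) + (n2 : ℂ)) := by
          rw [hαval]
          field_simp
          ring
        have habsα : norm α = (n2 : ℝ) / ((n1 : ℝ) + (n2 : ℝ)) := by
          rw [hαval, norm_div, norm_neg]
          rw [show ((n1 : ℂ) + (n2 : ℂ)) = ((n1 + n2 : ℕ) : ℂ) by push_cast; ring,
            Complex.norm_natCast, Complex.norm_natCast]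
          push_cast
          ring
        have habsα1 : norm (α + 1) = (n1 : ℝ) / ((n1 : ℝ) + (n2 : ℝ)) := by
          rw [hα1val, norm_div]
          rw [show ((n1 : ℂ) + (n2 : ℂ)) = ((n1 + n2 : ℕ) : ℂ) by push_cast; ring,
            Complex.norm_natCast, Complex.norm_natCast]
          push_cast
          ring
        have habs_sum : norm α + norm (α + 1) = 1 := by
          rw [habsα, habsα1, ← add_div, add_comm]
          exact div_self hdenR.ne'
        have hg1 := geomBound14 ω hωabs hωpos.ne' p j hp1
        have hg2 := geomBound14 ω hωabs hωpos.ne' (j + 1) q (by omega)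
        calc norm (∑ i ∈ Finset.Icc 1 N, G i j * ω ^ i)
            = norm (α * (∑ i ∈ Finset.Icc p j, ω ^ i)
              + (α + 1) * (∑ i ∈ Finset.Icc (j + 1) q, ω ^ i)) := by rw [hres, hS]
          _ ≤ norm (α * (∑ i ∈ Finset.Icc p j, ω ^ i))
              + norm ((α + 1) * (∑ i ∈ Finset.Icc (j + 1) q, ω ^ i)) :=
            norm_add_le _ _
          _ = norm α * norm (∑ i ∈ Finset.Icc p j, ω ^ i)
              + norm (α + 1) * norm (∑ i ∈ Finset.Icc (j + 1) q, ω ^ i) := by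
            rw [norm_mul, norm_mul]
          _ ≤ norm α * (2 / norm (ω - 1))
              + norm (α + 1) * (2 / norm (ω - 1)) :=
            add_le_add (mul_le_mul_of_nonneg_left hg1 (norm_nonneg _))
              (mul_le_mul_of_nonneg_left hg2 (norm_nonneg _))
          _ = (norm α + norm (α + 1)) * (2 / norm (ω - 1)) := by ring
          _ = 2 / norm (ω - 1) := by rw [habs_sum, one_mul]
      · -- j ∉ Λ : the column is zero
        have hz : ∀ i ∈ Finset.Icc 1 N, G i j * ω ^ i = 0 := by
          intro i hi
          obtain ⟨h1, h2⟩ := Finset.mem_Icc.mp hi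
          rcases zero14 hΛ hG hj i h1 h2 with
            ⟨p, q, _, _, _, _, _, _, hint, hpj, hjq⟩ | h0
          · exact absurd (hint j hpj hjq) hjΛ
          · rw [h0, zero_mul]
        rw [Finset.sum_eq_zero hz]
        rw [norm_zero]
        positivity
    -- final chain
    have hdft : dft N (fun i => G i j) k
        = ((Real.sqrt N)⁻¹ : ℝ) * ∑ i ∈ Finset.Icc 1 N, G i j * ω ^ i := by
      unfold dft
      congr 1
      exact Finset.sum_congr rfl fun i _ => congrArg (fun z => G i j * z) (hexp i)
    have habsk : |(k : ℝ)| = (k.natAbs : ℝ) := by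
      rw [← Int.cast_abs, Int.abs_eq_natAbs, Int.cast_natCast]
    rw [hdft, norm_mul]
    have hcoef : norm (((Real.sqrt N)⁻¹ : ℝ) : ℂ) = (Real.sqrt N)⁻¹ := by
      rw [Complex.norm_real, Real.norm_eq_abs, abs_of_nonneg (by positivity)]
    rw [hcoef, habsk]
    have hsqrtNpos : 0 < Real.sqrt N := Real.sqrt_pos.mpr hNR
    calc (Real.sqrt N)⁻¹ * norm (∑ i ∈ Finset.Icc 1 N, G i j * ω ^ i)
        ≤ (Real.sqrt N)⁻¹ * (2 / norm (ω - 1)) :=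
          mul_le_mul_of_nonneg_left hSbound (by positivity)
      _ ≤ (Real.sqrt N)⁻¹ * (2 / (Real.sqrt 2 * k.natAbs / N)) := by
          gcongr
      _ = Real.sqrt 2 * Real.sqrt N / (k.natAbs : ℝ) := by
          have e1 : Real.sqrt N * Real.sqrt N = N := Real.mul_self_sqrt hNR.le
          have e2 : Real.sqrt 2 * Real.sqrt 2 = 2 := Real.mul_self_sqrt (by norm_num)
          have h2pos : (0:ℝ) < Real.sqrt 2 := Real.sqrt_pos.mpr (by norm_num)
          have e1' : Real.sqrt N ^ 2 = (N : ℝ) := Real.sq_sqrt hNR.le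
          have e2' : Real.sqrt 2 ^ 2 = (2 : ℝ) := Real.sq_sqrt (by norm_num)
          field_simp
          linear_combination (-(Real.sqrt 2) ^ 2) * e1' - (N : ℝ) * e2'
  · -- k = 0
    have hz : dft N (fun i => G i j) 0 = 0 := by
      unfold dft
      have he : ∀ i ∈ Finset.Icc 1 N,
          G i j * Complex.exp (2 * Real.pi * Complex.I * (i : ℂ) * ((0 : ℤ) : ℂ) / (N : ℂ))
            = G i j := by
        intro i _
        norm_num
      rw [Finset.sum_congr rfl he, hsumall, mul_zero]
    rw [hz, norm_zero]
    exact Real.sqrt_nonneg N
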